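/- If C ⊆ F₂^m is a weakly self-dual code (C ⊆ C⊥) spanned by pairwise orthogonal even-weight vectors c₁,...,c_d, and at least one cᵢ has Hamming weight ≡ 2 (mod 4), then exactly half of the codewords of C have weight ≡ 0 (mod 4) and half have weight ≡ 2 (mod 4). -/

import Mathlib

open Finset in
lemma key_mod (m : ℕ) (x y : Fin m → ZMod 2) (h : dotProduct x y = 0) :
    hammingNorm (x + y) % 4 = (hammingNorm x + hammingNorm y) % 4 := by
  classical
  set A : Finset (Fin m) := {i | x i ≠ 0} with hA
  set B : Finset (Fin m) := {i | y i ≠ 0} with hB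
  have hsupp : ({i | (x + y) i ≠ 0} : Finset (Fin m)) = symmDiff A B := by
    ext i
    simp only [hA, hB, Finset.mem_filter, Finset.mem_univ, true_and, Finset.mem_symmDiff,
      Pi.add_apply]
    rcases (by decide : ∀ a : ZMod 2, a = 0 ∨ a = 1) (x i) with h1 | h1 <;>
      rcases (by decide : ∀ a : ZMod 2, a = 0 ∨ a = 1) (y i) with h2 | h2 <;>
      simp [h1, h2]; try decide
  have hdot : (((A ∩ B).card : ZMod 2)) = 0 := by
    rw [← h, dotProduct, Finset.card_eq_sum_ones, Nat.cast_sum]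
    rw [← Finset.sum_subset (Finset.subset_univ (A ∩ B)) (f := fun i => x i * y i)]
    · apply Finset.sum_congr rfl
      intro i hi
      simp only [hA, hB, Finset.mem_inter, Finset.mem_filter, Finset.mem_univ, true_and] at hi
      have h1 : x i = 1 := by
        rcases (by decide : ∀ a : ZMod 2, a = 0 ∨ a = 1) (x i) with h1 | h1
        · exact absurd h1 hi.1
        · exact h1
      have h2 : y i = 1 := by
        rcases (by decide : ∀ a : ZMod 2, a = 0 ∨ a = 1) (y i) with h2 | h2
        · exact absurd h2 hi.2
        · exact h2
      simp [h1, h2]; try decide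
    · intro i _ hi
      simp only [hA, hB, Finset.mem_inter, Finset.mem_filter, Finset.mem_univ, true_and,
        not_and_or, not_not] at hi
      rcases hi with h1 | h1 <;> simp [h1]
  have hk : 2 ∣ (A ∩ B).card := (ZMod.natCast_eq_zero_iff _ 2).mp hdot
  have hcard : (symmDiff A B).card + (A ∩ B).card + (A ∩ B).card = A.card + B.card := by
    rw [symmDiff_eq_sup_sdiff_inf]
    rw [show (A ⊔ B) = A ∪ B from rfl, show (A ⊓ B) = A ∩ B from rfl,
      Finset.card_sdiff_of_subset Finset.inter_subset_union]
    have := Finset.card_union_add_card_inter A B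
    have hle : (A ∩ B).card ≤ (A ∪ B).card := Finset.card_le_card Finset.inter_subset_union
    omega
  have h1 : hammingNorm (x + y) = (symmDiff A B).card := by
    rw [hammingNorm, hsupp]
  have h2 : hammingNorm x = A.card := rfl
  have h3 : hammingNorm y = B.card := rfl
  rw [h1, h2, h3]
  omega

/-- If `C ⊆ F₂^m` is a weakly self-dual code (`C ⊆ C⊥`) spanned by
pairwise orthogonal even-weight vectors `c₁, …, c_d`, and at least one `cᵢ` has
Hamming weight `≡ 2 (mod 4)`, then exactly half of the codewords of `C` have weight
`≡ 0 (mod 4)` and half have weight `≡ 2 (mod 4)`. -/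
theorem unbiased_even_code_split (m d : ℕ) (c : Fin d → (Fin m → ZMod 2))
    (C : Submodule (ZMod 2) (Fin m → ZMod 2))
    (hC : C = Submodule.span (ZMod 2) (Set.range c))
    (hsd : ∀ x ∈ C, ∀ y ∈ C, dotProduct x y = 0)
    (horth : ∀ i j, i ≠ j → dotProduct (c i) (c j) = 0)
    (heven : ∀ i, Even (hammingNorm (c i)))
    (hbias : ∃ i, hammingNorm (c i) % 4 = 2) :
    {x : Fin m → ZMod 2 | x ∈ C ∧ hammingNorm x % 4 = 0}.ncard =
      {x : Fin m → ZMod 2 | x ∈ C ∧ hammingNorm x % 4 = 2}.ncard := by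
  obtain ⟨i₀, hi₀⟩ := hbias
  have hc : c i₀ ∈ C := by
    rw [hC]; exact Submodule.subset_span ⟨i₀, rfl⟩
  have hswap : ∀ x ∈ C, hammingNorm (x + c i₀) % 4
      = (hammingNorm x + hammingNorm (c i₀)) % 4 :=
    fun x hx => key_mod m x (c i₀) (hsd x hx _ hc)
  have hinv : ∀ x : Fin m → ZMod 2, x + c i₀ + c i₀ = x := by
    intro x
    have : c i₀ + c i₀ = 0 := by
      ext j
      rcases (by decide : ∀ a : ZMod 2, a = 0 ∨ a = 1) (c i₀ j) with h1 | h1 <;>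
        simp [h1] <;> decide
    rw [add_assoc, this, add_zero]
  have himg : (fun x => x + c i₀) '' {x : Fin m → ZMod 2 | x ∈ C ∧ hammingNorm x % 4 = 0}
      = {x : Fin m → ZMod 2 | x ∈ C ∧ hammingNorm x % 4 = 2} := by
    ext y
    constructor
    · rintro ⟨x, ⟨hxC, hx0⟩, rfl⟩
      refine ⟨C.add_mem hxC hc, ?_⟩
      show hammingNorm (x + c i₀) % 4 = 2
      have := hswap x hxC
      omega
    · rintro ⟨hyC, hy2⟩
      refine ⟨y + c i₀, ⟨C.add_mem hyC hc, ?_⟩, hinv y⟩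
      have := hswap y hyC
      omega
  rw [← himg, Set.ncard_image_of_injective _ (add_left_injective (c i₀))]
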